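/- Output correctness of PDC deterministic second half: under the uniqueness assumption (for each a ∈ E^{(I)} there is a unique y_I(a) with (a, y_I(a)) ∈ E), the output σ_I(a, y_I(a)) of Algorithm PDC-DSH, where a is accepted with probability P(X_I = y_I(a)) / max_ℓ P(X_I = ℓ), has law ℒ((X^{(I)}, X_I) | (X^{(I)}, X_I) ∈ E). -/

import Mathlib

open MeasureTheory ProbabilityTheory

lemma pdc_aux_alg (F M x pa : ENNReal) (hM0 : M ≠ 0) (hMt : M ≠ ⊤) :
    (F / M)⁻¹ * (x * (pa / M)) = F⁻¹ * (x * pa) := by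
  rw [div_eq_mul_inv, div_eq_mul_inv, ENNReal.mul_inv (Or.inr (ENNReal.inv_ne_top.mpr hM0))
    (Or.inr (ENNReal.inv_ne_zero.mpr hMt)), inv_inv]
  calc F⁻¹ * M * (x * (pa * M⁻¹)) = F⁻¹ * (x * pa) * (M * M⁻¹) := by ring
    _ = F⁻¹ * (x * pa) := by rw [ENNReal.mul_inv_cancel hM0 hMt, mul_one]

lemma pdc_aux_unif {Ω : Type*} [MeasurableSpace Ω] (μ : Measure Ω) [IsProbabilityMeasure μ]
    (U : Ω → ℝ) (hU : Measurable U)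
    (hUunif : μ.map U = MeasureTheory.volume.restrict (Set.Icc (0 : ℝ) 1))
    (c : ENNReal) (hc : c ≤ 1) :
    μ {ω | ENNReal.ofReal (U ω) < c} = c := by
  have hctop : c ≠ ⊤ := (lt_of_le_of_lt hc ENNReal.one_lt_top).ne
  rcases eq_or_ne c 0 with rfl | hc0
  · simp
  · have hset : {x : ℝ | ENNReal.ofReal x < c} = Set.Iio c.toReal := by
      ext x
      simp only [Set.mem_setOf_eq, Set.mem_Iio]
      rcases le_or_gt 0 x with hx | hx
      · exact ENNReal.ofReal_lt_iff_lt_toReal hx hctop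
      · constructor
        · intro _; exact lt_of_lt_of_le hx ENNReal.toReal_nonneg
        · intro _; rw [ENNReal.ofReal_of_nonpos hx.le]; exact hc0.bot_lt
    have h1 : {ω | ENNReal.ofReal (U ω) < c} = U ⁻¹' {x | ENNReal.ofReal x < c} := rfl
    have htR : c.toReal ≤ 1 := by
      simpa using ENNReal.toReal_mono ENNReal.one_ne_top hc
    rw [h1, hset, ← Measure.map_apply hU measurableSet_Iio, hUunif,
      Measure.restrict_apply measurableSet_Iio]
    have h2 : Set.Iio c.toReal ∩ Set.Icc 0 1 = Set.Ico 0 c.toReal := by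
      ext x
      simp only [Set.mem_inter_iff, Set.mem_Iio, Set.mem_Icc, Set.mem_Ico]
      constructor
      · rintro ⟨h, h0, _⟩; exact ⟨h0, h⟩
      · rintro ⟨h0, h⟩; exact ⟨h, h0, (h.le.trans htR)⟩
    rw [h2, Real.volume_Ico]
    simp [ENNReal.ofReal_toReal hctop]

/-- **Output correctness of PDC deterministic second half.** Under the uniqueness assumption
(for each `a` in the projection `E'` of `E` there is a unique `y a` with `(a, y a) ∈ E`),
the output `(a, y a)` of the PDC-DSH algorithm — where the first-stage sample `a` is accepted
when `U < P(Z = y a) / max_ℓ P(Z = ℓ)` for `U` uniform on `[0,1]` independent of `A` — has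
law `ℒ((X^{(I)}, X_I) | (X^{(I)}, X_I) ∈ E)`. -/
theorem pdc_dsh_output_correct
    {Ω α β : Type*} [MeasurableSpace Ω] [MeasurableSpace α] [MeasurableSpace β]
    [Countable α] [MeasurableSingletonClass α]
    [Countable β] [MeasurableSingletonClass β]
    (μ : Measure Ω) [IsProbabilityMeasure μ]
    (A : Ω → α) (Z : Ω → β) (U : Ω → ℝ)
    (hA : Measurable A) (hZ : Measurable Z) (hU : Measurable U)
    (hAZ : IndepFun A Z μ)
    (hUindep : IndepFun A U μ)
    (hUunif : μ.map U = MeasureTheory.volume.restrict (Set.Icc (0 : ℝ) 1))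
    (E : Set (α × β))
    (y : α → β) (hymeas : Measurable y)
    (hy : ∀ a ∈ {a | ∃ b, (a, b) ∈ E}, (a, y a) ∈ E)
    (huniq : ∀ a ∈ {a | ∃ b, (a, b) ∈ E}, ∀ b, (a, b) ∈ E → b = y a)
    (M : ENNReal) (hM : M = ⨆ ℓ : β, μ {ω | Z ω = ℓ})
    (hpos : 0 < μ {ω | (A ω, Z ω) ∈ E}) :
    (μ[|{ω | A ω ∈ {a | ∃ b, (a, b) ∈ E} ∧
        ENNReal.ofReal (U ω) < μ {ω' | Z ω' = y (A ω)} / M}]).map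
          (fun ω => (A ω, y (A ω)))
      = (μ[|{ω | (A ω, Z ω) ∈ E}]).map (fun ω => (A ω, Z ω)) := by
  classical
  -- Basic facts about M
  have hMle : M ≤ 1 := by
    rw [hM]; exact iSup_le fun ℓ => prob_le_one
  have hMtop : M ≠ ⊤ := (hMle.trans_lt ENNReal.one_lt_top).ne
  have hMne : M ≠ 0 := by
    intro h0
    have hall : ∀ ℓ : β, μ (Z ⁻¹' {ℓ}) = 0 := by
      intro ℓ
      have h := le_iSup (fun ℓ => μ {ω | Z ω = ℓ}) ℓ
      rw [← hM, h0] at h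
      exact le_antisymm h zero_le
    have h0' : μ (⋃ ℓ : β, Z ⁻¹' {ℓ}) = 0 := measure_iUnion_null hall
    have huniv : (⋃ ℓ : β, Z ⁻¹' {ℓ}) = Set.univ := by ext ω; simp
    rw [huniv, measure_univ] at h0'
    exact one_ne_zero h0'
  have hple : ∀ a : α, μ (Z ⁻¹' {y a}) ≤ M := by
    intro a
    rw [hM]
    exact le_iSup (fun ℓ => μ {ω | Z ω = ℓ}) (y a)
  have hcle : ∀ a : α, μ (Z ⁻¹' {y a}) / M ≤ 1 :=
    fun a => ENNReal.div_le_of_le_mul (by rw [one_mul]; exact hple a)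
  set S : Set Ω := {ω | A ω ∈ {a | ∃ b, (a, b) ∈ E} ∧
      ENNReal.ofReal (U ω) < μ {ω' | Z ω' = y (A ω)} / M} with hSdef
  set F : Set Ω := {ω | (A ω, Z ω) ∈ E} with hFdef
  -- Measurability
  have hE'm : MeasurableSet {a : α | ∃ b, (a, b) ∈ E} := (Set.to_countable _).measurableSet
  have hFm : MeasurableSet F := (hA.prodMk hZ) (Set.to_countable E).measurableSet
  have hltm : ∀ c : ENNReal, MeasurableSet {x : ℝ | ENNReal.ofReal x < c} :=
    fun c => measurableSet_lt ENNReal.measurable_ofReal measurable_const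
  have hSm : MeasurableSet S := by
    have h1 : MeasurableSet {ω | A ω ∈ {a : α | ∃ b, (a, b) ∈ E}} := hA hE'm
    have h2 : MeasurableSet {ω | ENNReal.ofReal (U ω) < μ {ω' | Z ω' = y (A ω)} / M} :=
      measurableSet_lt (ENNReal.measurable_ofReal.comp hU)
        ((measurable_of_countable (fun a : α => μ {ω' | Z ω' = y a} / M)).comp hA)
    exact h1.inter h2
  -- Fiberwise decomposition of a measure along A
  have decomp : ∀ T : Set Ω, MeasurableSet T → μ T = ∑' a : α, μ (T ∩ A ⁻¹' {a}) := by
    intro T hT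
    have hUn : T = ⋃ a : α, T ∩ A ⁻¹' {a} := by ext ω; simp
    conv_lhs => rw [hUn]
    refine measure_iUnion ?_ (fun a => hT.inter (hA (measurableSet_singleton a)))
    intro i j hij
    simp only [Function.onFun]
    rw [Set.disjoint_left]
    rintro ω ⟨_, hi⟩ ⟨_, hj⟩
    exact hij (hi.symm.trans hj)
  -- Fiber measures for S
  have hSfiber : ∀ a : α, μ (S ∩ A ⁻¹' {a}) =
      if a ∈ {a : α | ∃ b, (a, b) ∈ E} then μ (A ⁻¹' {a}) * (μ (Z ⁻¹' {y a}) / M) else 0 := by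
    intro a
    by_cases ha : a ∈ {a : α | ∃ b, (a, b) ∈ E}
    · rw [if_pos ha]
      have hseteq : S ∩ A ⁻¹' {a}
          = A ⁻¹' {a} ∩ U ⁻¹' {x | ENNReal.ofReal x < μ (Z ⁻¹' {y a}) / M} := by
        ext ω
        simp only [hSdef, Set.mem_inter_iff, Set.mem_setOf_eq, Set.mem_preimage,
          Set.mem_singleton_iff]
        constructor
        · rintro ⟨⟨_, hlt⟩, hAa⟩
          rw [hAa] at hlt
          exact ⟨hAa, hlt⟩
        · rintro ⟨hAa, hlt⟩
          exact ⟨⟨by rw [hAa]; exact ha, by rw [hAa]; exact hlt⟩, hAa⟩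
      rw [hseteq, hUindep.measure_inter_preimage_eq_mul _ _ (measurableSet_singleton a) (hltm _)]
      congr 1
      exact pdc_aux_unif μ U hU hUunif _ (hcle a)
    · rw [if_neg ha]
      have hempty : S ∩ A ⁻¹' {a} = ∅ := by
        ext ω
        simp only [hSdef, Set.mem_inter_iff, Set.mem_setOf_eq, Set.mem_preimage,
          Set.mem_singleton_iff, Set.mem_empty_iff_false, iff_false, not_and]
        rintro ⟨hmem, _⟩ hAa
        exact ha (hAa ▸ hmem)
      rw [hempty, measure_empty]
  -- Fiber measures for F
  have hFfiber : ∀ a : α, μ (F ∩ A ⁻¹' {a}) =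
      if a ∈ {a : α | ∃ b, (a, b) ∈ E} then μ (A ⁻¹' {a}) * μ (Z ⁻¹' {y a}) else 0 := by
    intro a
    by_cases ha : a ∈ {a : α | ∃ b, (a, b) ∈ E}
    · rw [if_pos ha]
      have hseteq : F ∩ A ⁻¹' {a} = A ⁻¹' {a} ∩ Z ⁻¹' {y a} := by
        ext ω
        simp only [hFdef, Set.mem_inter_iff, Set.mem_setOf_eq, Set.mem_preimage,
          Set.mem_singleton_iff]
        constructor
        · rintro ⟨hE, hAa⟩
          rw [hAa] at hE
          exact ⟨hAa, huniq a ha _ hE⟩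
        · rintro ⟨hAa, hZa⟩
          refine ⟨?_, hAa⟩
          rw [hAa, hZa]
          exact hy a ha
      rw [hseteq,
        hAZ.measure_inter_preimage_eq_mul _ _ (measurableSet_singleton a)
          (measurableSet_singleton (y a))]
    · rw [if_neg ha]
      have hempty : F ∩ A ⁻¹' {a} = ∅ := by
        ext ω
        simp only [hFdef, Set.mem_inter_iff, Set.mem_setOf_eq, Set.mem_preimage,
          Set.mem_singleton_iff, Set.mem_empty_iff_false, iff_false, not_and]
        intro hE hAa
        exact ha ⟨Z ω, hAa ▸ hE⟩
      rw [hempty, measure_empty]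
  -- total masses
  have hμS : μ S = μ F / M := by
    rw [decomp S hSm, decomp F hFm]
    have hterm : ∀ a : α, μ (S ∩ A ⁻¹' {a}) = μ (F ∩ A ⁻¹' {a}) * M⁻¹ := by
      intro a
      rw [hSfiber a, hFfiber a]
      by_cases ha : a ∈ {a : α | ∃ b, (a, b) ∈ E}
      · rw [if_pos ha, if_pos ha, div_eq_mul_inv, mul_assoc]
      · rw [if_neg ha, if_neg ha, zero_mul]
    rw [tsum_congr hterm, ENNReal.tsum_mul_right, div_eq_mul_inv]
  have hμFne : μ F ≠ 0 := hpos.ne'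
  have hμSne : μ S ≠ 0 := by
    rw [hμS]
    exact (ENNReal.div_pos hμFne hMtop).ne'
  -- Measurability of the output maps
  have hmap1 : Measurable (fun ω => (A ω, y (A ω))) := hA.prodMk (hymeas.comp hA)
  have hmap2 : Measurable (fun ω => (A ω, Z ω)) := hA.prodMk hZ
  apply Measure.ext_of_singleton
  rintro ⟨a, b⟩
  rw [Measure.map_apply hmap1 (measurableSet_singleton _),
    Measure.map_apply hmap2 (measurableSet_singleton _),
    cond_apply hSm, cond_apply hFm]
  have hpre2 : (fun ω => (A ω, Z ω)) ⁻¹' {(a, b)} = A ⁻¹' {a} ∩ Z ⁻¹' {b} := by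
    ext ω
    simp [Prod.ext_iff]
  by_cases ha : a ∈ {a : α | ∃ b, (a, b) ∈ E}
  · by_cases hb : y a = b
    · -- main case
      subst hb
      have hpre1 : (fun ω => (A ω, y (A ω))) ⁻¹' {(a, y a)} = A ⁻¹' {a} := by
        ext ω
        simp only [Set.mem_preimage, Set.mem_singleton_iff, Prod.ext_iff]
        constructor
        · rintro ⟨h1, _⟩; exact h1
        · intro h1; exact ⟨h1, by rw [h1]⟩
      have hFint : F ∩ (A ⁻¹' {a} ∩ Z ⁻¹' {y a}) = A ⁻¹' {a} ∩ Z ⁻¹' {y a} := by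
        apply Set.inter_eq_self_of_subset_right
        rintro ω ⟨h1, h2⟩
        simp only [Set.mem_preimage, Set.mem_singleton_iff] at h1 h2
        show (A ω, Z ω) ∈ E
        rw [h1, h2]
        exact hy a ha
      rw [hpre1, hpre2, hFint,
        hAZ.measure_inter_preimage_eq_mul _ _ (measurableSet_singleton a)
          (measurableSet_singleton (y a)),
        hSfiber a, if_pos ha, hμS]
      exact pdc_aux_alg (μ F) M (μ (A ⁻¹' {a})) (μ (Z ⁻¹' {y a})) hMne hMtop
    · -- b ≠ y a : both sides vanish
      have hpre1 : (fun ω => (A ω, y (A ω))) ⁻¹' {(a, b)} = ∅ := by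
        ext ω
        simp only [Set.mem_preimage, Set.mem_singleton_iff, Prod.ext_iff,
          Set.mem_empty_iff_false, iff_false, not_and]
        intro h1 h2
        exact hb (by rw [← h1]; exact h2)
      have hFint : F ∩ (A ⁻¹' {a} ∩ Z ⁻¹' {b}) = ∅ := by
        ext ω
        simp only [hFdef, Set.mem_inter_iff, Set.mem_setOf_eq, Set.mem_preimage,
          Set.mem_singleton_iff, Set.mem_empty_iff_false, iff_false, not_and]
        intro hE h1 h2
        rw [h1, h2] at hE
        exact hb (huniq a ha b hE).symm
      rw [hpre1, hpre2, hFint, Set.inter_empty, measure_empty, mul_zero, mul_zero]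
  · -- a not in the projection: both sides vanish
    have hS0 : μ (S ∩ (fun ω => (A ω, y (A ω))) ⁻¹' {(a, b)}) = 0 := by
      refine measure_mono_null ?_ (by rw [hSfiber a, if_neg ha])
      rintro ω ⟨h1, h2⟩
      simp only [Set.mem_preimage, Set.mem_singleton_iff, Prod.ext_iff] at h2
      exact ⟨h1, by simp only [Set.mem_preimage, Set.mem_singleton_iff]; exact h2.1⟩
    have hF0 : F ∩ (A ⁻¹' {a} ∩ Z ⁻¹' {b}) = ∅ := by
      ext ω
      simp only [hFdef, Set.mem_inter_iff, Set.mem_setOf_eq, Set.mem_preimage,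
        Set.mem_singleton_iff, Set.mem_empty_iff_false, iff_false, not_and]
      intro hE h1 h2
      exact ha ⟨b, by rw [← h1, ← h2]; exact hE⟩
    rw [hpre2, hF0, hS0, measure_empty, mul_zero, mul_zero]
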